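/- Let B ∈ M_m(𝔽_q[[t]]) be a glissando square matrix and let l ≥ 0 be an integer. Write P(X) = det(I − t^l X B) = Σ_{n=0}^m p_n X^n ∈ 𝔽_q[[t]][X]. Then for every n with 0 ≤ n ≤ m, the coefficient p_n satisfies v_t(p_n) ≥ l·n + n(n−1)/2, where v_t is the t-adic valuation on 𝔽_q[[t]] normalized by v_t(t) = 1 (and v_t(0) = +∞). -/

import Mathlib

open Polynomial

noncomputable section DrinfeldGM

/-- Integer-argument binomial coefficient `C(c,d)`, equal to `0` whenever any of
`c`, `d`, `c - d` is negative. -/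
def intChoose (c d : ℤ) : ℤ :=
  if 0 ≤ c ∧ 0 ≤ d ∧ d ≤ c then (Nat.choose c.toNat d.toNat : ℤ) else 0

/-- The `(i,j)` entry of the matrix of the `U`-operator on `S_k(Γ₁(t))` in the
Bandini–Valentino basis (here `t` is the polynomial variable `X`).  For `i = j` it is
`(-t)^j C(k-2-j, j)`; for `i = j + h(q-1)` with `h ≠ 0` (equivalently `(q-1) ∣ i - j`,
`i ≠ j`, in which case `h(q-1) = i - j`) it is
`-t^j (C(k-2-i, j-i) + (-1)^{j+1} C(k-2-i, j))`; and it is `0` otherwise. -/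
def Uent (F : Type*) [Field F] (q k : ℕ) (i j : ℕ) : Polynomial F :=
  if i = j then
    (-Polynomial.X : Polynomial F) ^ j * ((intChoose ((k : ℤ) - 2 - (j : ℤ)) (j : ℤ) : ℤ) : Polynomial F)
  else if ((q : ℤ) - 1) ∣ ((i : ℤ) - (j : ℤ)) then
    -((Polynomial.X : Polynomial F) ^ j *
      ((intChoose ((k : ℤ) - 2 - (i : ℤ)) ((j : ℤ) - (i : ℤ)) +
        (-1) ^ (j + 1) * intChoose ((k : ℤ) - 2 - (i : ℤ)) (j : ℤ) : ℤ) : Polynomial F))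
  else 0

/-- The representing matrix `U^{(k)} ∈ M_{k-1}(𝔽_q[t])` of the `U`-operator on
`S_k(Γ₁(t))`, rows and columns indexed by `0, …, k-2`. -/
def Umat (F : Type*) [Field F] (q k : ℕ) :
    Matrix (Fin (k - 1)) (Fin (k - 1)) (Polynomial F) :=
  Matrix.of fun i j => Uent F q k (i : ℕ) (j : ℕ)

/-- A matrix over `𝔽_q[[t]]` is *glissando* if every entry of its `j`-th column is an
`𝔽_q`-multiple of `t^j`. -/
def Glissando {F : Type*} [Field F] {m n : ℕ}
    (B : Matrix (Fin m) (Fin n) (PowerSeries F)) : Prop :=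
  ∀ i j, ∃ c : F, B i j = PowerSeries.C c * (PowerSeries.X : PowerSeries F) ^ (j : ℕ)

/-- The inclusion `𝔽_q[t] → 𝔽_q[[t]]`. -/
def polyToPS (F : Type*) [Field F] : Polynomial F →+* PowerSeries F :=
  Polynomial.coeToPowerSeries.ringHom

/-- The inclusion of `𝔽_q[[t]]` into a fixed algebraic closure `K̄` of `K = 𝔽_q((t))`. -/
def psToKbar (F : Type*) [Field F] :
    PowerSeries F →+* AlgebraicClosure (LaurentSeries F) :=
  (algebraMap (LaurentSeries F) (AlgebraicClosure (LaurentSeries F))).comp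
    (algebraMap (PowerSeries F) (LaurentSeries F))

/-- The inclusion `𝔽_q[t] → K̄`. -/
def polyToKbar (F : Type*) [Field F] :
    Polynomial F →+* AlgebraicClosure (LaurentSeries F) :=
  (psToKbar F).comp (polyToPS F)

/-- The element `t` of `K̄`. -/
def tbar (F : Type*) [Field F] : AlgebraicClosure (LaurentSeries F) :=
  psToKbar F PowerSeries.X

/-- Integrality over `𝔽_q[[t]]` of an element of `K̄`. -/
def IntegralPS (F : Type*) [Field F] (x : AlgebraicClosure (LaurentSeries F)) : Prop :=
  letI : Algebra (PowerSeries F) (AlgebraicClosure (LaurentSeries F)) := (psToKbar F).toAlgebra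
  IsIntegral (PowerSeries F) x

/-- `HasVal F λ α` says that `λ ∈ K̄` is nonzero and has valuation `α` for the unique
extension `v` to `K̄` of the `t`-adic valuation with `v(t) = 1`: writing `α = a/b` with
`b > 0`, this means that both `λ^b/t^a` and `t^a/λ^b` are integral over `𝔽_q[[t]]`. -/
def HasVal (F : Type*) [Field F] (lam : AlgebraicClosure (LaurentSeries F)) (α : ℚ) : Prop :=
  lam ≠ 0 ∧ ∃ a b : ℤ, 0 < b ∧ α = (a : ℚ) / (b : ℚ) ∧
    IntegralPS F (lam ^ b / tbar F ^ a) ∧ IntegralPS F (tbar F ^ a / lam ^ b)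

/-- `d(k, α)`: the number of roots `λ` of `det(X·I - U^{(k)})` in `K̄` with `v(λ) = α`,
counted with multiplicity.  This is the dimension of the slope-`α` generalized eigenspace
of the `U`-operator on `S_k(Γ₁(t))`. -/
def dDim (F : Type*) [Field F] (q k : ℕ) (α : ℚ) : ℕ :=
  letI := Classical.decPred fun lam : AlgebraicClosure (LaurentSeries F) => HasVal F lam α
  Multiset.card <| Multiset.filter (fun lam => HasVal F lam α) <|
    (((Umat F q k).charpoly).map (polyToKbar F)).roots

/-- `det(I - t^l X B)` for a square matrix `B` over `𝔽_q[[t]]`, as a polynomial in `X`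
over `𝔽_q[[t]]`. -/
def charSeriesTw (F : Type*) [Field F] {m : ℕ} (l : ℕ)
    (B : Matrix (Fin m) (Fin m) (PowerSeries F)) : Polynomial (PowerSeries F) :=
  Matrix.det (1 - (Polynomial.C ((PowerSeries.X : PowerSeries F) ^ l) * Polynomial.X) •
    B.map Polynomial.C)

/-- `det(I - X B)` for a square matrix `B` over `𝔽_q[[t]]`. -/
def charSeriesPS (F : Type*) [Field F] {m : ℕ}
    (B : Matrix (Fin m) (Fin m) (PowerSeries F)) : Polynomial (PowerSeries F) :=
  Matrix.det (1 - (Polynomial.X : Polynomial (PowerSeries F)) • B.map Polynomial.C)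

/-- `P^{(k)}(X) = det(I - X·U^{(k)}) ∈ 𝔽_q[t][X]`. -/
def Pser (F : Type*) [Field F] (q k : ℕ) : Polynomial (Polynomial F) :=
  Matrix.det (1 - (Polynomial.X : Polynomial (Polynomial F)) • (Umat F q k).map Polynomial.C)


/-- For a glissando square matrix `B ∈ M_m(𝔽_q[[t]])` and `l ≥ 0`, the coefficients
`p_n` of `P(X) = det(I - t^l X B) = Σ p_n X^n` satisfy `v_t(p_n) ≥ l·n + n(n-1)/2`,
i.e. `t^{l·n + n(n-1)/2}` divides `p_n`, for every `0 ≤ n ≤ m`. -/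


private lemma sum_range_card_le' :
    ∀ (n : ℕ) (s : Finset ℕ), s.card = n → ∑ i ∈ Finset.range n, i ≤ ∑ i ∈ s, i := by
  intro n
  induction n with
  | zero => intro s _; simp
  | succ k ih =>
    intro s hs
    have hne : s.Nonempty := Finset.card_pos.mp (by omega)
    have hMem : s.max' hne ∈ s := s.max'_mem hne
    have hcard : (s.erase (s.max' hne)).card = k := by
      rw [Finset.card_erase_of_mem hMem, hs]; rfl
    have hkM : k ≤ s.max' hne := by
      by_contra h
      push_neg at h
      have hsub : s ⊆ Finset.range (s.max' hne + 1) :=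
        fun x hx => Finset.mem_range.mpr (Nat.lt_succ_of_le (s.le_max' x hx))
      have := Finset.card_le_card hsub
      rw [hs, Finset.card_range] at this
      omega
    calc ∑ i ∈ Finset.range (k+1), i = (∑ i ∈ Finset.range k, i) + k :=
          Finset.sum_range_succ _ _
      _ ≤ (∑ i ∈ s.erase (s.max' hne), i) + s.max' hne :=
          add_le_add (ih _ hcard) hkM
      _ = ∑ i ∈ s, i := Finset.sum_erase_add _ _ hMem
private lemma fin_sum_ge {m n : ℕ} (u : Finset (Fin m)) (hu : u.card = n) :
    n * (n - 1) / 2 ≤ ∑ i ∈ u, (i : ℕ) := by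
  have himg : (u.image (Fin.val)).card = n := by
    rw [Finset.card_image_of_injective _ Fin.val_injective, hu]
  have hsum : ∑ i ∈ u.image Fin.val, (id i : ℕ) = ∑ i ∈ u, id (i : ℕ) :=
    Finset.sum_image (fun x _ y _ h => Fin.val_injective h)
  simp only [id] at hsum
  rw [← hsum, ← Finset.sum_range_id n]
  exact himg ▸ sum_range_card_le' n _ himg

theorem glissando_charSeries_coeff_dvd
    (p q : ℕ) (hp : p.Prime) (hq : ∃ e : ℕ, 1 ≤ e ∧ q = p ^ e)
    (F : Type) [Field F] [Fintype F] (hF : Fintype.card F = q)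
    (m : ℕ) (B : Matrix (Fin m) (Fin m) (PowerSeries F)) (hB : Glissando B)
    (l : ℕ) (n : ℕ) (hn : n ≤ m) :
    (PowerSeries.X : PowerSeries F) ^ (l * n + n * (n - 1) / 2) ∣
      (charSeriesTw F l B).coeff n := by
  classical
  set N := l * n + n * (n - 1) / 2 with hN
  set a : Equiv.Perm (Fin m) → Fin m → PowerSeries F :=
    fun σ i => if σ i = i then 1 else 0 with ha
  set b : Equiv.Perm (Fin m) → Fin m → PowerSeries F :=
    fun σ i => -(PowerSeries.X ^ l * B (σ i) i) with hb
  have hbd : ∀ (σ : Equiv.Perm (Fin m)) (i : Fin m),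
      (PowerSeries.X : PowerSeries F) ^ (l + (i : ℕ)) ∣ b σ i := by
    intro σ i
    obtain ⟨c, hc⟩ := hB (σ i) i
    refine dvd_neg.mpr ?_
    rw [hc, pow_add]
    exact mul_dvd_mul (dvd_refl _) (Dvd.dvd.mul_left (dvd_refl _) _)
  have key : ∀ (σ : Equiv.Perm (Fin m)) (i : Fin m),
      ((1 - (Polynomial.C ((PowerSeries.X : PowerSeries F) ^ l) * Polynomial.X) •
        B.map Polynomial.C : Matrix (Fin m) (Fin m) (Polynomial (PowerSeries F)))) (σ i) i
      = Polynomial.C (a σ i) + Polynomial.X * Polynomial.C (b σ i) := by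
    intro σ i
    simp only [Matrix.sub_apply, Matrix.one_apply, Matrix.smul_apply, Matrix.map_apply,
      smul_eq_mul, ha, hb, map_neg, map_mul, apply_ite (Polynomial.C), map_one, map_zero]
    split_ifs <;> ring
  rw [charSeriesTw, Matrix.det_apply', Polynomial.finset_sum_coeff]
  refine Finset.dvd_sum fun σ _ => ?_
  rw [← Polynomial.C_eq_intCast, Polynomial.coeff_C_mul]
  refine Dvd.dvd.mul_left ?_ _
  rw [Finset.prod_congr rfl (fun i _ => key σ i), Finset.prod_add,
    Polynomial.finset_sum_coeff]
  refine Finset.dvd_sum fun t _ => ?_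
  have hprodC : (∏ i ∈ t, Polynomial.C (a σ i)) = Polynomial.C (∏ i ∈ t, a σ i) :=
    (map_prod _ _ _).symm
  have hprodX : (∏ i ∈ Finset.univ \ t, (Polynomial.X * Polynomial.C (b σ i)))
      = Polynomial.X ^ (Finset.univ \ t).card *
        Polynomial.C (∏ i ∈ Finset.univ \ t, b σ i) := by
    rw [Finset.prod_mul_distrib, Finset.prod_const, map_prod]
  rw [hprodC, hprodX, Polynomial.coeff_C_mul, mul_comm (Polynomial.X ^ _),
    Polynomial.coeff_C_mul, Polynomial.coeff_X_pow]
  by_cases hcard : n = (Finset.univ \ t).card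
  · simp only [if_pos hcard, mul_one]
    refine Dvd.dvd.mul_left ?_ _
    have hdvd : (PowerSeries.X : PowerSeries F) ^
        (∑ i ∈ Finset.univ \ t, (l + (i : ℕ))) ∣ ∏ i ∈ Finset.univ \ t, b σ i := by
      rw [← Finset.prod_pow_eq_pow_sum]
      exact Finset.prod_dvd_prod_of_dvd _ _ fun i _ => hbd σ i
    refine dvd_trans (pow_dvd_pow _ ?_) hdvd
    rw [Finset.sum_add_distrib, Finset.sum_const, smul_eq_mul, ← hcard, hN]
    exact add_le_add (le_of_eq (Nat.mul_comm l n)) (fin_sum_ge _ hcard.symm)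
  · simp [if_neg hcard]


end DrinfeldGM
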